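/- Let d, p ≥ 1, let A be a d×d real matrix and B a d×p real matrix, let β ≥ 0, ρ̄ ∈ (0,1), γ ≥ 0, and let k ≥ 1 be an integer. Suppose ‖A^m‖₂ ≤ β·ρ̄^m for every integer m ≥ 0, and let u : ℕ → ℝ^p satisfy Σ_{s=kℓ}^{k(ℓ+1)−1} ‖u_s‖₂² ≤ k·γ² for every integer ℓ ≥ 0. Define x_t := Σ_{s=0}^{t−1} A^{t−1−s}·B·u_s for t ≥ 0. Then ‖x_t‖₂ ≤ 2·β·‖B‖₂·k·γ/(1 − ρ̄^k) for every t ≥ 0. -/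
import Mathlib


noncomputable section

open Matrix
open scoped Matrix.Norms.L2Operator

/-- Euclidean norm of a real vector. -/
def enormR {n : Type*} [Fintype n] (v : n → ℝ) : ℝ :=
  Real.sqrt (∑ i, (v i) ^ 2)

/-- Spectral norm (ℓ² → ℓ² operator norm) of a real matrix. -/
def snormR {m n : Type*} [Fintype m] [Fintype n] (M : Matrix m n ℝ) : ℝ :=
  sSup {r : ℝ | ∃ v : n → ℝ, enormR v ≤ 1 ∧ r = enormR (M.mulVec v)}

lemma enormR_eq {n : Type*} [Fintype n] (v : n → ℝ) :
    enormR v = ‖(WithLp.equiv 2 (n → ℝ)).symm v‖ := by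
  rw [EuclideanSpace.norm_eq, enormR]
  congr 1
  refine Finset.sum_congr rfl fun i _ => ?_
  rw [Real.norm_eq_abs, sq_abs]
  rfl

lemma enormR_nonneg {n : Type*} [Fintype n] (v : n → ℝ) : 0 ≤ enormR v :=
  Real.sqrt_nonneg _

lemma enormR_zero {n : Type*} [Fintype n] : enormR (0 : n → ℝ) = 0 := by
  simp [enormR]

lemma enormR_smul {n : Type*} [Fintype n] (c : ℝ) (v : n → ℝ) :
    enormR (c • v) = |c| * enormR v := by
  rw [enormR_eq, enormR_eq]
  have : (WithLp.equiv 2 (n → ℝ)).symm (c • v)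
      = c • (WithLp.equiv 2 (n → ℝ)).symm v := rfl
  rw [this, norm_smul, Real.norm_eq_abs]

lemma enormR_eq_zero {n : Type*} [Fintype n] {v : n → ℝ} (h : enormR v = 0) : v = 0 := by
  rw [enormR_eq] at h
  have := norm_eq_zero.mp h
  simpa using congrArg (WithLp.equiv 2 (n → ℝ)) this

lemma snormR_bddAbove {m n : Type*} [Fintype m] [Fintype n] [DecidableEq m] [DecidableEq n]
    (M : Matrix m n ℝ) :
    BddAbove {r : ℝ | ∃ v : n → ℝ, enormR v ≤ 1 ∧ r = enormR (M.mulVec v)} := by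
  refine ⟨‖M‖, fun r hr => ?_⟩
  obtain ⟨v, hv, rfl⟩ := hr
  calc enormR (M.mulVec v)
      = ‖(EuclideanSpace.equiv m ℝ).symm (M *ᵥ ((WithLp.equiv 2 (n → ℝ)).symm v))‖ := by
        rw [enormR_eq]; rfl
    _ ≤ ‖M‖ * ‖(WithLp.equiv 2 (n → ℝ)).symm v‖ := M.l2_opNorm_mulVec _
    _ ≤ ‖M‖ * 1 := by
        refine mul_le_mul_of_nonneg_left ?_ (norm_nonneg _)
        rw [← enormR_eq]; exact hv
    _ = ‖M‖ := mul_one _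

lemma snormR_nonneg {m n : Type*} [Fintype m] [Fintype n] [DecidableEq m] [DecidableEq n]
    (M : Matrix m n ℝ) : 0 ≤ snormR M := by
  have h0 : (0 : ℝ) ∈ {r : ℝ | ∃ v : n → ℝ, enormR v ≤ 1 ∧ r = enormR (M.mulVec v)} :=
    ⟨0, by rw [enormR_zero]; norm_num, by rw [Matrix.mulVec_zero, enormR_zero]⟩
  exact le_csSup (snormR_bddAbove M) h0

lemma enormR_mulVec_le {m n : Type*} [Fintype m] [Fintype n] [DecidableEq m] [DecidableEq n]
    (M : Matrix m n ℝ) (v : n → ℝ) :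
    enormR (M.mulVec v) ≤ snormR M * enormR v := by
  rcases eq_or_ne v 0 with rfl | hv
  · rw [Matrix.mulVec_zero, enormR_zero, enormR_zero, mul_zero]
  · have hpos : 0 < enormR v := by
      rcases lt_or_eq_of_le (enormR_nonneg v) with h | h
      · exact h
      · exact absurd (enormR_eq_zero h.symm) hv
    set w : n → ℝ := (enormR v)⁻¹ • v with hw
    have hw1 : enormR w = 1 := by
      rw [hw, enormR_smul, abs_of_pos (inv_pos.mpr hpos), inv_mul_cancel₀ hpos.ne']
    have hmem : enormR (M.mulVec w) ∈
        {r : ℝ | ∃ v : n → ℝ, enormR v ≤ 1 ∧ r = enormR (M.mulVec v)} :=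
      ⟨w, hw1.le, rfl⟩
    have hle : enormR (M.mulVec w) ≤ snormR M := le_csSup (snormR_bddAbove M) hmem
    have hMw : enormR (M.mulVec w) = (enormR v)⁻¹ * enormR (M.mulVec v) := by
      rw [hw, Matrix.mulVec_smul, enormR_smul, abs_of_pos (inv_pos.mpr hpos)]
    rw [hMw] at hle
    calc enormR (M.mulVec v) = enormR v * ((enormR v)⁻¹ * enormR (M.mulVec v)) := by
          field_simp
      _ ≤ enormR v * snormR M := mul_le_mul_of_nonneg_left hle hpos.le
      _ = snormR M * enormR v := mul_comm _ _

lemma enormR_sum_le {n : Type*} [Fintype n] {ι : Type*} (s : Finset ι) (f : ι → n → ℝ) :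
    enormR (∑ i ∈ s, f i) ≤ ∑ i ∈ s, enormR (f i) := by
  have : (WithLp.equiv 2 (n → ℝ)).symm (∑ i ∈ s, f i)
      = ∑ i ∈ s, (WithLp.equiv 2 (n → ℝ)).symm (f i) :=
    map_sum (WithLp.linearEquiv 2 ℝ (n → ℝ)).symm f s
  rw [enormR_eq, this]
  refine (norm_sum_le _ _).trans ?_
  exact le_of_eq (Finset.sum_congr rfl fun i _ => (enormR_eq _).symm)

lemma sum_range_mul_eq (g : ℕ → ℝ) (k : ℕ) :
    ∀ L : ℕ, ∑ i ∈ Finset.range (k * L), g i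
      = ∑ ℓ ∈ Finset.range L, ∑ j ∈ Finset.range k, g (k * ℓ + j)
  | 0 => by simp
  | (L + 1) => by
    rw [Nat.mul_succ, Finset.sum_range_add, sum_range_mul_eq g k L, Finset.sum_range_succ]

lemma geo_bound {ρ : ℝ} (hρ0 : 0 < ρ) (hρ1 : ρ < 1) {k : ℕ} (hk : 1 ≤ k) (L : ℕ) :
    ∑ j ∈ Finset.range L, ρ ^ (k * (j - 1)) ≤ 2 / (1 - ρ ^ k) := by
  have hrk1 : ρ ^ k < 1 := pow_lt_one₀ hρ0.le hρ1 (by omega)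
  have hrk0 : (0 : ℝ) ≤ ρ ^ k := pow_nonneg hρ0.le k
  have hden : 0 < 1 - ρ ^ k := by linarith
  have h1d : (1 : ℝ) ≤ 1 / (1 - ρ ^ k) := by
    rw [le_div_iff₀ hden]; linarith
  cases L with
  | zero => simp; positivity
  | succ n =>
    rw [Finset.sum_range_succ']
    have h0 : ρ ^ (k * (0 - 1)) = 1 := by norm_num
    have hterm : ∀ i ∈ Finset.range n, ρ ^ (k * (i + 1 - 1)) = (ρ ^ k) ^ i := by
      intro i _
      rw [Nat.add_sub_cancel, pow_mul]
    rw [h0, Finset.sum_congr rfl hterm]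
    have hgeo : ∑ i ∈ Finset.range n, (ρ ^ k) ^ i ≤ 1 / (1 - ρ ^ k) := by
      rw [geom_sum_eq (by linarith : ρ ^ k ≠ 1)]
      have heq : ((ρ ^ k) ^ n - 1) / (ρ ^ k - 1) = (1 - (ρ ^ k) ^ n) / (1 - ρ ^ k) := by
        rw [← neg_sub 1 ((ρ ^ k) ^ n), ← neg_sub 1 (ρ ^ k), neg_div_neg_eq]
      rw [heq]
      have hpn : (0 : ℝ) ≤ (ρ ^ k) ^ n := pow_nonneg hrk0 n
      rw [div_le_div_iff₀ hden hden]
      nlinarith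
    calc ∑ i ∈ Finset.range n, (ρ ^ k) ^ i + 1
        ≤ 1 / (1 - ρ ^ k) + 1 / (1 - ρ ^ k) := by linarith
      _ = 2 / (1 - ρ ^ k) := by ring

/-- **Deterministic state-norm bound.**
If `‖A^m‖₂ ≤ β·ρ̄^m` and each length-`k` block of the input has average power at most `γ²`,
then the noiseless response `x_t = Σ_{s<t} A^{t−1−s}·B·u_s` satisfies
`‖x_t‖₂ ≤ 2·β·‖B‖₂·k·γ/(1 − ρ̄^k)` for every `t`. -/
theorem stmt9 {d p : ℕ} (hd : 1 ≤ d) (hp : 1 ≤ p)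
    (A : Matrix (Fin d) (Fin d) ℝ) (B : Matrix (Fin d) (Fin p) ℝ)
    (β ρ γ : ℝ) (hβ : 0 ≤ β) (hρ0 : 0 < ρ) (hρ1 : ρ < 1) (hγ : 0 ≤ γ)
    (k : ℕ) (hk : 1 ≤ k)
    (hA : ∀ m : ℕ, snormR (A ^ m) ≤ β * ρ ^ m)
    (u : ℕ → Fin p → ℝ)
    (hu : ∀ ℓ : ℕ, ∑ s ∈ Finset.range k, enormR (u (k * ℓ + s)) ^ 2 ≤ k * γ ^ 2) :
    ∀ t : ℕ,
      enormR (∑ s ∈ Finset.range t, ((A ^ (t - 1 - s)) * B).mulVec (u s)) ≤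
        2 * β * snormR B * k * γ / (1 - ρ ^ k) := by
  intro t
  have hB0 : 0 ≤ snormR B := snormR_nonneg B
  have hrk1 : ρ ^ k < 1 := pow_lt_one₀ hρ0.le hρ1 (by omega)
  have hden : 0 < 1 - ρ ^ k := by linarith
  have hRHS0 : 0 ≤ 2 * β * snormR B * k * γ / (1 - ρ ^ k) := by positivity
  rcases Nat.eq_zero_or_pos t with rfl | ht
  · simpa [enormR_zero] using hRHS0
  -- per-term bound
  set C : ℝ := β * snormR B with hC
  have hC0 : 0 ≤ C := mul_nonneg hβ hB0
  have hterm : ∀ s : ℕ,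
      enormR (((A ^ (t - 1 - s)) * B).mulVec (u s)) ≤ C * ρ ^ (t - 1 - s) * enormR (u s) := by
    intro s
    rw [← Matrix.mulVec_mulVec]
    calc enormR ((A ^ (t - 1 - s)).mulVec (B.mulVec (u s)))
        ≤ snormR (A ^ (t - 1 - s)) * enormR (B.mulVec (u s)) := enormR_mulVec_le _ _
      _ ≤ (β * ρ ^ (t - 1 - s)) * (snormR B * enormR (u s)) := by
          refine mul_le_mul (hA _) (enormR_mulVec_le _ _) (enormR_nonneg _) ?_
          positivity
      _ = C * ρ ^ (t - 1 - s) * enormR (u s) := by rw [hC]; ring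
  -- block structure
  set L : ℕ := (t - 1) / k + 1 with hL
  have hk0 : 0 < k := hk
  have htL : t ≤ k * L := by
    have h2 : t - 1 < L * k := (Nat.div_lt_iff_lt_mul hk0).mp (Nat.lt_succ_self _)
    rw [Nat.mul_comm] at h2
    exact Nat.le_of_pred_lt h2
  have hkL1 : k * (L - 1) ≤ t - 1 := by
    have hL1 : L - 1 = (t - 1) / k := by simp [hL]
    rw [hL1]
    calc k * ((t - 1) / k) = (t - 1) / k * k := Nat.mul_comm _ _
      _ ≤ t - 1 := Nat.div_mul_le_self _ _
  have hCS : ∀ ℓ : ℕ, ∑ j ∈ Finset.range k, enormR (u (k * ℓ + j)) ≤ k * γ := by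
    intro ℓ
    have hnn : 0 ≤ ∑ j ∈ Finset.range k, enormR (u (k * ℓ + j)) :=
      Finset.sum_nonneg fun j _ => enormR_nonneg _
    have hsq : (∑ j ∈ Finset.range k, enormR (u (k * ℓ + j))) ^ 2 ≤ ((k : ℝ) * γ) ^ 2 := by
      calc (∑ j ∈ Finset.range k, enormR (u (k * ℓ + j))) ^ 2
          ≤ (Finset.range k).card * ∑ j ∈ Finset.range k, enormR (u (k * ℓ + j)) ^ 2 :=
            sq_sum_le_card_mul_sum_sq
        _ ≤ (k : ℝ) * ((k : ℝ) * γ ^ 2) := by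
            rw [Finset.card_range]
            exact mul_le_mul_of_nonneg_left (hu ℓ) (Nat.cast_nonneg k)
        _ = ((k : ℝ) * γ) ^ 2 := by ring
    have hkγ : 0 ≤ (k : ℝ) * γ := by positivity
    exact (pow_le_pow_iff_left₀ hnn hkγ two_ne_zero).mp hsq
  have hblock : ∀ ℓ : ℕ,
      ∑ j ∈ Finset.range k, C * ρ ^ (t - 1 - (k * ℓ + j)) * enormR (u (k * ℓ + j))
        ≤ C * ρ ^ (t - k * (ℓ + 1)) * ((k : ℝ) * γ) := by
    intro ℓ
    have hstep : ∀ j ∈ Finset.range k,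
        C * ρ ^ (t - 1 - (k * ℓ + j)) * enormR (u (k * ℓ + j))
          ≤ C * ρ ^ (t - k * (ℓ + 1)) * enormR (u (k * ℓ + j)) := by
      intro j hj
      have hj' : j < k := Finset.mem_range.mp hj
      have hexp : t - k * (ℓ + 1) ≤ t - 1 - (k * ℓ + j) := by
        rw [Nat.sub_sub]
        apply Nat.sub_le_sub_left
        rw [Nat.mul_succ]
        generalize k * ℓ = a
        omega
      have hρ : ρ ^ (t - 1 - (k * ℓ + j)) ≤ ρ ^ (t - k * (ℓ + 1)) :=
        pow_le_pow_of_le_one hρ0.le hρ1.le hexp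
      exact mul_le_mul_of_nonneg_right (mul_le_mul_of_nonneg_left hρ hC0) (enormR_nonneg _)
    calc ∑ j ∈ Finset.range k, C * ρ ^ (t - 1 - (k * ℓ + j)) * enormR (u (k * ℓ + j))
        ≤ ∑ j ∈ Finset.range k, C * ρ ^ (t - k * (ℓ + 1)) * enormR (u (k * ℓ + j)) :=
          Finset.sum_le_sum hstep
      _ = C * ρ ^ (t - k * (ℓ + 1)) * ∑ j ∈ Finset.range k, enormR (u (k * ℓ + j)) := by
          rw [Finset.mul_sum]
      _ ≤ C * ρ ^ (t - k * (ℓ + 1)) * ((k : ℝ) * γ) := by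
          refine mul_le_mul_of_nonneg_left (hCS ℓ) ?_
          positivity
  have hgeoterm : ∀ ℓ ∈ Finset.range L, ρ ^ (t - k * (ℓ + 1)) ≤ ρ ^ (k * (L - 2 - ℓ)) := by
    intro ℓ hℓ
    have hℓ' : ℓ < L := Finset.mem_range.mp hℓ
    rcases le_or_gt (ℓ + 2) L with hcase | hcase
    · apply pow_le_pow_of_le_one hρ0.le hρ1.le
      apply Nat.le_sub_of_add_le
      have heq : k * (L - 2 - ℓ) + k * (ℓ + 1) = k * (L - 1) := by
        rw [← Nat.mul_add]
        congr 1
        omega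
      rw [heq]
      exact Nat.le_trans hkL1 (Nat.sub_le t 1)
    · have h2 : L - 2 - ℓ = 0 := by omega
      rw [h2, Nat.mul_zero, pow_zero]
      exact pow_le_one₀ hρ0.le hρ1.le
  have hgeosum : ∑ ℓ ∈ Finset.range L, ρ ^ (t - k * (ℓ + 1)) ≤ 2 / (1 - ρ ^ k) := by
    calc ∑ ℓ ∈ Finset.range L, ρ ^ (t - k * (ℓ + 1))
        ≤ ∑ ℓ ∈ Finset.range L, ρ ^ (k * (L - 2 - ℓ)) := Finset.sum_le_sum hgeoterm
      _ = ∑ j ∈ Finset.range L, ρ ^ (k * (L - 2 - (L - 1 - j))) :=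
          (Finset.sum_range_reflect (fun ℓ => ρ ^ (k * (L - 2 - ℓ))) L).symm
      _ = ∑ j ∈ Finset.range L, ρ ^ (k * (j - 1)) := by
          refine Finset.sum_congr rfl fun j hj => ?_
          have hj' : j < L := Finset.mem_range.mp hj
          have : L - 2 - (L - 1 - j) = j - 1 := by omega
          rw [this]
      _ ≤ 2 / (1 - ρ ^ k) := geo_bound hρ0 hρ1 hk L
  calc enormR (∑ s ∈ Finset.range t, ((A ^ (t - 1 - s)) * B).mulVec (u s))
      ≤ ∑ s ∈ Finset.range t, enormR (((A ^ (t - 1 - s)) * B).mulVec (u s)) :=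
        enormR_sum_le _ _
    _ ≤ ∑ s ∈ Finset.range t, C * ρ ^ (t - 1 - s) * enormR (u s) :=
        Finset.sum_le_sum fun s _ => hterm s
    _ ≤ ∑ s ∈ Finset.range (k * L), C * ρ ^ (t - 1 - s) * enormR (u s) := by
        refine Finset.sum_le_sum_of_subset_of_nonneg (Finset.range_subset_range.mpr htL) ?_
        intro s _ _
        exact mul_nonneg (mul_nonneg hC0 (pow_nonneg hρ0.le _)) (enormR_nonneg _)
    _ = ∑ ℓ ∈ Finset.range L, ∑ j ∈ Finset.range k,
          C * ρ ^ (t - 1 - (k * ℓ + j)) * enormR (u (k * ℓ + j)) :=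
        sum_range_mul_eq _ k L
    _ ≤ ∑ ℓ ∈ Finset.range L, C * ρ ^ (t - k * (ℓ + 1)) * ((k : ℝ) * γ) :=
        Finset.sum_le_sum fun ℓ _ => hblock ℓ
    _ = (C * ((k : ℝ) * γ)) * ∑ ℓ ∈ Finset.range L, ρ ^ (t - k * (ℓ + 1)) := by
        rw [Finset.mul_sum]
        exact Finset.sum_congr rfl fun ℓ _ => by ring
    _ ≤ (C * ((k : ℝ) * γ)) * (2 / (1 - ρ ^ k)) := by
        refine mul_le_mul_of_nonneg_left hgeosum ?_
        positivity
    _ = 2 * β * snormR B * k * γ / (1 - ρ ^ k) := by rw [hC]; ring
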